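/- Let E be an Archimedean vector lattice and e ∈ E such that f^[2] := sup_{λ∈ℝ}(2λf − λ²e) exists for every f ∈ E. Then e is a weak order unit of E, i.e., e ∈ E⁺ and the only f ∈ E with |f| ∧ e = 0 is f = 0. -/
import Mathlib

section Aux

variable {E : Type*} [Lattice E] [AddCommGroup E]
    [Module ℝ E] [CovariantClass E E (· + ·) (· ≤ ·)] [PosSMulMono ℝ E]

lemma aux_smul_inf {c : ℝ} (hc : 0 < c) (a b : E) : c • (a ⊓ b) = c • a ⊓ c • b := by
  apply le_antisymm
  · exact le_inf (smul_le_smul_of_nonneg_left inf_le_left hc.le)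
      (smul_le_smul_of_nonneg_left inf_le_right hc.le)
  · have h : c⁻¹ • (c • a ⊓ c • b) ≤ a ⊓ b := by
      apply le_inf
      · calc c⁻¹ • (c • a ⊓ c • b) ≤ c⁻¹ • (c • a) :=
              smul_le_smul_of_nonneg_left inf_le_left (by positivity)
          _ = a := by rw [smul_smul, inv_mul_cancel₀ hc.ne', one_smul]
      · calc c⁻¹ • (c • a ⊓ c • b) ≤ c⁻¹ • (c • b) :=
              smul_le_smul_of_nonneg_left inf_le_right (by positivity)
          _ = b := by rw [smul_smul, inv_mul_cancel₀ hc.ne', one_smul]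
    calc c • a ⊓ c • b = c • (c⁻¹ • (c • a ⊓ c • b)) := by
          rw [smul_smul, mul_inv_cancel₀ hc.ne', one_smul]
      _ ≤ c • (a ⊓ b) := smul_le_smul_of_nonneg_left h hc.le

lemma aux_disj {g : E} {e : E} (hg : 0 ≤ g) (he : 0 ≤ e) (h : g ⊓ e = 0)
    {s t : ℝ} (hs : 0 ≤ s) (ht : 0 ≤ t) : s • g ⊓ t • e = 0 := by
  set m : ℝ := max s t + 1 with hm
  have hmpos : 0 < m := by positivity
  have h1 : s • g ≤ m • g := by
    have : (0 : E) ≤ (m - s) • g := smul_nonneg (by simp [hm]; linarith [le_max_left s t]) hg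
    have := add_le_add_left this (s • g)
    simpa [← add_smul] using this
  have h2 : t • e ≤ m • e := by
    have : (0 : E) ≤ (m - t) • e := smul_nonneg (by simp [hm]; linarith [le_max_right s t]) he
    have := add_le_add_left this (t • e)
    simpa [← add_smul] using this
  have hub : s • g ⊓ t • e ≤ 0 := by
    calc s • g ⊓ t • e ≤ m • g ⊓ m • e := inf_le_inf h1 h2
      _ = m • (g ⊓ e) := (aux_smul_inf hmpos g e).symm
      _ = 0 := by rw [h, smul_zero]
  have hlb : (0 : E) ≤ s • g ⊓ t • e := le_inf (smul_nonneg hs hg) (smul_nonneg ht he)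
  exact le_antisymm hub hlb

end Aux

/-- If `(E,e)` is a square closed pointed Archimedean vector lattice,
then `e` is a weak order unit. -/
theorem square_closed_weak_order_unit {E : Type*} [Lattice E] [AddCommGroup E]
    [Module ℝ E] [CovariantClass E E (· + ·) (· ≤ ·)] [PosSMulMono ℝ E]
    (hArch : ∀ x y : E, (∀ n : ℕ, (n : ℝ) • x ≤ y) → x ≤ 0)
    (e : E) (sq : E → E)
    (hsq : ∀ f : E, IsLUB (Set.range fun l : ℝ => (2 * l) • f - (l ^ 2) • e) (sq f)) :
    0 ≤ e ∧ ∀ f : E, |f| ⊓ e = 0 → f = 0 := by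
  have he : 0 ≤ e := by
    have h : -e ≤ 0 := by
      apply hArch (-e) (sq 0)
      intro n
      have := (hsq 0).1 ⟨Real.sqrt n, rfl⟩
      simp only [smul_zero, zero_sub, Real.sq_sqrt (Nat.cast_nonneg n)] at this
      simpa [smul_neg] using this
    exact neg_nonpos.mp h
  refine ⟨he, fun f hf => ?_⟩
  set g := |f| with hg
  have hg0 : 0 ≤ g := abs_nonneg f
  have hsqg0 : 0 ≤ sq g := by
    have := (hsq g).1 ⟨0, rfl⟩
    simpa using this
  have key : ∀ n : ℕ, (n : ℝ) • g ≤ sq g := by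
    intro n
    have hub : (n : ℝ) • g ≤ ((n : ℝ) ^ 2 / 4) • e + sq g := by
      have := (hsq g).1 ⟨(n : ℝ) / 2, rfl⟩
      have h2 : 2 * ((n : ℝ) / 2) = (n : ℝ) := by ring
      have h3 : ((n : ℝ) / 2) ^ 2 = (n : ℝ) ^ 2 / 4 := by ring
      dsimp only at this
      rw [h2, h3] at this
      have := sub_le_iff_le_add.mp this
      rwa [add_comm] at this
    have hdisj : ((n : ℝ) • g) ⊓ (((n : ℝ) ^ 2 / 4) • e) = 0 :=
      aux_disj hg0 he hf (Nat.cast_nonneg n) (by positivity)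
    calc (n : ℝ) • g = ((n : ℝ) • g) ⊓ ((n : ℝ) • g) := (inf_idem _).symm
      _ ≤ ((n : ℝ) • g) ⊓ (((n : ℝ) ^ 2 / 4) • e + sq g) := inf_le_inf_left _ hub
      _ ≤ (((n : ℝ) • g) ⊓ (((n : ℝ) ^ 2 / 4) • e)) + sq g := by
          rw [← sub_le_iff_le_add, inf_sub]
          refine inf_le_inf (sub_le_self _ hsqg0) ?_
          simp
      _ = sq g := by rw [hdisj, zero_add]
  have hgle : g ≤ 0 := hArch g (sq g) key
  have habs : |f| = 0 := le_antisymm hgle hg0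
  have h1 : f ≤ 0 := habs ▸ le_abs_self f
  have h2 : 0 ≤ f := by have := neg_le_abs f; rw [habs] at this; simpa using this
  exact le_antisymm h1 h2
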